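/- Let P_1, ..., P_T be orthogonal projections on R^d and M = P_T⋯P_1. Then for any v in R^d and any m with 1 ≤ m ≤ T-1, ||(I - P_m)v||^2 ≤ m(||v||^2 - ||Mv||^2). -/

import Mathlib

/-- The product `P (n-1) * ⋯ * P 0` (so that `P 0` is applied first). -/
noncomputable def prodUpTo (d : ℕ)
    (P : ℕ → (EuclideanSpace ℝ (Fin d) →L[ℝ] EuclideanSpace ℝ (Fin d))) :
    ℕ → (EuclideanSpace ℝ (Fin d) →L[ℝ] EuclideanSpace ℝ (Fin d))
  | 0 => 1
  | n + 1 => P n * prodUpTo d P n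

open scoped RealInnerProductSpace
open Finset

variable {d : ℕ}

local notation "E" d => EuclideanSpace ℝ (Fin d)

lemma pyth (Q : (E d) →L[ℝ] (E d)) (hsa : IsSelfAdjoint Q) (hid : Q * Q = Q)
    (x : E d) : ‖x‖ ^ 2 = ‖Q x‖ ^ 2 + ‖x - Q x‖ ^ 2 := by
  have h0 : (inner ℝ (Q x) (x - Q x) : ℝ) = 0 := by
    have h2 : Q (Q x) = Q x := by
      have := congrArg (fun f => f x) hid; simpa using this
    have h3 := hsa.isSymmetric x (x - Q x)
    simp only [ContinuousLinearMap.coe_coe] at h3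
    rw [h3]
    simp [map_sub, h2]
  have : x = Q x + (x - Q x) := by abel
  calc ‖x‖ ^ 2 = ‖Q x + (x - Q x)‖ ^ 2 := by rw [← this]
    _ = ‖Q x‖ ^ 2 + 2 * (inner ℝ (Q x) (x - Q x) : ℝ) + ‖x - Q x‖ ^ 2 := norm_add_sq_real _ _
    _ = ‖Q x‖ ^ 2 + ‖x - Q x‖ ^ 2 := by rw [h0]; ring

lemma contr (Q : (E d) →L[ℝ] (E d)) (hsa : IsSelfAdjoint Q) (hid : Q * Q = Q)
    (x : E d) : ‖x - Q x‖ ≤ ‖x‖ := by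
  have h := pyth Q hsa hid x
  nlinarith [norm_nonneg (Q x), norm_nonneg (x - Q x), norm_nonneg x]

/-- 0-indexed: `P m` is the paper's task `m+1`, so the factor is `m+1`
and `m` ranges over `0,…,T-2`. -/
theorem residual_on_task_m_bound (d T : ℕ)
    (P : ℕ → (EuclideanSpace ℝ (Fin d) →L[ℝ] EuclideanSpace ℝ (Fin d)))
    (hsa : ∀ i < T, IsSelfAdjoint (P i)) (hidem : ∀ i < T, P i * P i = P i)
    (v : EuclideanSpace ℝ (Fin d)) (m : ℕ) (hm : m + 1 < T) :
    ‖((1 : EuclideanSpace ℝ (Fin d) →L[ℝ] EuclideanSpace ℝ (Fin d)) - P m) v‖ ^ 2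
      ≤ ((m : ℝ) + 1) * (‖v‖ ^ 2 - ‖prodUpTo d P T v‖ ^ 2) := by
  set W : ℕ → E d := fun k => prodUpTo d P k v with hW
  have hW0 : W 0 = v := by simp [hW, prodUpTo]
  have hWs : ∀ k, W (k + 1) = P k (W k) := by
    intro k; simp [hW, prodUpTo, ContinuousLinearMap.mul_apply]
  set a : ℕ → ℝ := fun k => ‖W k - P k (W k)‖ with ha
  have hstep : ∀ k < T, ‖W k‖ ^ 2 - ‖W (k + 1)‖ ^ 2 = a k ^ 2 := by
    intro k hk
    have := pyth (P k) (hsa k hk) (hidem k hk) (W k)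
    rw [hWs k]; simp only [ha]; linarith
  have htel : ∑ i ∈ Finset.range T, a i ^ 2 = ‖v‖ ^ 2 - ‖W T‖ ^ 2 := by
    rw [Finset.sum_congr rfl (fun i hi => (hstep i (Finset.mem_range.mp hi)).symm)]
    rw [Finset.sum_range_sub' (fun k => ‖W k‖ ^ 2), hW0]
  have hm1 : m < T := Nat.lt_of_succ_lt hm
  -- partial sum bound
  have hpartial : ∑ i ∈ Finset.range (m + 1), a i ^ 2 ≤ ‖v‖ ^ 2 - ‖W T‖ ^ 2 := by
    rw [← htel]
    refine Finset.sum_le_sum_of_subset_of_nonneg ?_ (fun i _ _ => sq_nonneg _)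
    exact Finset.range_subset_range.mpr (le_of_lt hm)
  -- norm bound
  have hvm : ‖v - W m‖ ≤ ∑ i ∈ Finset.range m, a i := by
    have hsum : ∑ i ∈ Finset.range m, (W i - W (i + 1)) = v - W m := by
      rw [Finset.sum_range_sub' W, hW0]
    calc ‖v - W m‖ = ‖∑ i ∈ Finset.range m, (W i - W (i + 1))‖ := by rw [hsum]
      _ ≤ ∑ i ∈ Finset.range m, ‖W i - W (i + 1)‖ := norm_sum_le _ _
      _ = ∑ i ∈ Finset.range m, a i := by
          refine Finset.sum_congr rfl fun i _ => ?_
          rw [hWs i]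
  have hkey : ‖((1 : (E d) →L[ℝ] (E d)) - P m) v‖ ≤ ∑ i ∈ Finset.range (m + 1), a i := by
    have hdecomp : ((1 : (E d) →L[ℝ] (E d)) - P m) v
        = ((v - W m) - P m (v - W m)) + (W m - P m (W m)) := by
      simp [ContinuousLinearMap.sub_apply, map_sub]; abel
    calc ‖((1 : (E d) →L[ℝ] (E d)) - P m) v‖
        ≤ ‖(v - W m) - P m (v - W m)‖ + ‖W m - P m (W m)‖ := by
          rw [hdecomp]; exact norm_add_le _ _
      _ ≤ ‖v - W m‖ + a m := by
          gcongr
          exact contr (P m) (hsa m hm1) (hidem m hm1) _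
      _ ≤ (∑ i ∈ Finset.range m, a i) + a m := by gcongr
      _ = ∑ i ∈ Finset.range (m + 1), a i := (Finset.sum_range_succ a m).symm
  have hCS : (∑ i ∈ Finset.range (m + 1), a i) ^ 2
      ≤ ((m : ℝ) + 1) * ∑ i ∈ Finset.range (m + 1), a i ^ 2 := by
    have := sq_sum_le_card_mul_sum_sq (s := Finset.range (m + 1)) (f := a)
    simpa [Finset.card_range, Nat.cast_add] using this
  have h1 : ‖((1 : (E d) →L[ℝ] (E d)) - P m) v‖ ^ 2
      ≤ (∑ i ∈ Finset.range (m + 1), a i) ^ 2 :=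
    pow_le_pow_left₀ (norm_nonneg _) hkey 2
  have := mul_le_mul_of_nonneg_left hpartial (by positivity : (0:ℝ) ≤ (m : ℝ) + 1)
  calc ‖((1 : (E d) →L[ℝ] (E d)) - P m) v‖ ^ 2
      ≤ ((m : ℝ) + 1) * ∑ i ∈ Finset.range (m + 1), a i ^ 2 := le_trans h1 hCS
    _ ≤ ((m : ℝ) + 1) * (‖v‖ ^ 2 - ‖W T‖ ^ 2) := this
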